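/- For every nonnegative integer s and every B ∈ [0,1], the following implication holds for real numbers x, y, a: if 0 ≤ y ≤ 1, a ≥ 0, and x·y ≤ a + B·x, then x·y^s ≤ s·a + B^s·x. -/
import Mathlib


theorem stmt11 (s : ℕ) (B x y a : ℝ) (hB : B ∈ Set.Icc (0 : ℝ) 1)
    (hy0 : 0 ≤ y) (hy1 : y ≤ 1) (ha : 0 ≤ a) (h : x * y ≤ a + B * x) :
    x * y ^ s ≤ s * a + B ^ s * x := by
  obtain ⟨hB0, hB1⟩ := hB
  induction s with
  | zero => simp
  | succ n ih =>
    have hys : (0:ℝ) ≤ y ^ n := pow_nonneg hy0 n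
    have hys1 : y ^ n ≤ 1 := pow_le_one₀ hy0 hy1
    have h1 : x * y ^ (n + 1) ≤ (a + B * x) * y ^ n := by
      calc x * y ^ (n + 1) = (x * y) * y ^ n := by ring
        _ ≤ (a + B * x) * y ^ n := mul_le_mul_of_nonneg_right h hys
    have h2 : (a + B * x) * y ^ n = a * y ^ n + B * (x * y ^ n) := by ring
    have h3 : a * y ^ n ≤ a := by nlinarith
    have h4 : B * (x * y ^ n) ≤ B * (n * a + B ^ n * x) :=
      mul_le_mul_of_nonneg_left ih hB0
    have h5 : B * (n * a + B ^ n * x) = B * n * a + B ^ (n+1) * x := by ring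
    have h6 : B * n * a ≤ n * a := by
      have : (0:ℝ) ≤ (n:ℝ) * a := mul_nonneg (Nat.cast_nonneg n) ha
      nlinarith
    push_cast
    nlinarith
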